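/- Suppose the joint distribution p of (X_1,...,X_n,Y) is head-to-head, i.e. X_1,...,X_n are mutually independent (marginally). Then RSI(X;Y) = -TC(X|Y) ≤ 0. -/

import Mathlib

open Classical Finset Real

namespace HOI

/-- Distribution (pmf) of a random variable `X` on a finite sample space with mass `p`. -/
noncomputable def pdist {Ω α : Type} [Fintype Ω] (p : Ω → ℝ) (X : Ω → α) (a : α) : ℝ :=
  ∑ ω, if X ω = a then p ω else 0

/-- Shannon entropy of a finitely-supported discrete random variable. -/
noncomputable def ent {Ω α : Type} [Fintype Ω] [Fintype α] (p : Ω → ℝ) (X : Ω → α) : ℝ :=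
  ∑ a, Real.negMulLog (pdist p X a)

/-- Conditional entropy H(X|Y) = H(X,Y) - H(Y). -/
noncomputable def cent {Ω α β : Type} [Fintype Ω] [Fintype α] [Fintype β]
    (p : Ω → ℝ) (X : Ω → α) (Y : Ω → β) : ℝ :=
  ent p (fun ω => (X ω, Y ω)) - ent p Y

/-- Mutual information I(X;Y). -/
noncomputable def mi {Ω α β : Type} [Fintype Ω] [Fintype α] [Fintype β]
    (p : Ω → ℝ) (X : Ω → α) (Y : Ω → β) : ℝ :=
  ent p X + ent p Y - ent p (fun ω => (X ω, Y ω))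

/-- Conditional mutual information I(X;Y|Z). -/
noncomputable def cmi {Ω α β γ : Type} [Fintype Ω] [Fintype α] [Fintype β] [Fintype γ]
    (p : Ω → ℝ) (X : Ω → α) (Y : Ω → β) (Z : Ω → γ) : ℝ :=
  cent p X Z + cent p Y Z - cent p (fun ω => (X ω, Y ω)) Z

/-- Interaction information II(X;Y;Z) = I(X;Y) - I(X;Y|Z). -/
noncomputable def ii {Ω α β γ : Type} [Fintype Ω] [Fintype α] [Fintype β] [Fintype γ]
    (p : Ω → ℝ) (X : Ω → α) (Y : Ω → β) (Z : Ω → γ) : ℝ :=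
  mi p X Y - cmi p X Y Z

/-- Sub-vector of components of `X` with indices in `s`. -/
def subvec {Ω : Type} {n : ℕ} {α : Fin n → Type} (X : ∀ i, Ω → α i) (s : Finset (Fin n)) :
    Ω → ((i : {j // j ∈ s}) → α i.1) :=
  fun ω i => X i.1 ω

/-- The full random vector. -/
def fullvec {Ω : Type} {n : ℕ} {α : Fin n → Type} (X : ∀ i, Ω → α i) : Ω → (∀ i, α i) :=
  fun ω i => X i ω

/-- Joint entropy of the components of `X` with indices in `s`. -/
noncomputable def vecH {Ω : Type} [Fintype Ω] {n : ℕ} {α : Fin n → Type} [∀ i, Fintype (α i)]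
    (p : Ω → ℝ) (X : ∀ i, Ω → α i) (s : Finset (Fin n)) : ℝ :=
  ent p (subvec X s)

/-- Total correlation. -/
noncomputable def TC {Ω : Type} [Fintype Ω] {n : ℕ} {α : Fin n → Type} [∀ i, Fintype (α i)]
    (p : Ω → ℝ) (X : ∀ i, Ω → α i) : ℝ :=
  (∑ j, ent p (X j)) - ent p (fullvec X)

/-- Dual total correlation. -/
noncomputable def DTC {Ω : Type} [Fintype Ω] {n : ℕ} {α : Fin n → Type} [∀ i, Fintype (α i)]
    (p : Ω → ℝ) (X : ∀ i, Ω → α i) : ℝ :=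
  ent p (fullvec X) - ∑ j, (ent p (fullvec X) - vecH p X (Finset.univ \ {j}))

/-- O-information. -/
noncomputable def Oinfo {Ω : Type} [Fintype Ω] {n : ℕ} {α : Fin n → Type} [∀ i, Fintype (α i)]
    (p : Ω → ℝ) (X : ∀ i, Ω → α i) : ℝ :=
  ((n : ℝ) - 2) * ent p (fullvec X) + ∑ j, (ent p (X j) - vecH p X (Finset.univ \ {j}))

/-- Redundancy-synergy index. -/
noncomputable def RSI {Ω β : Type} [Fintype Ω] [Fintype β] {n : ℕ} {α : Fin n → Type}
    [∀ i, Fintype (α i)] (p : Ω → ℝ) (X : ∀ i, Ω → α i) (Y : Ω → β) : ℝ :=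
  (∑ j, mi p (X j) Y) - mi p (fullvec X) Y

end HOI

open HOI

section AuxHOI

variable {Ω : Type} [Fintype Ω]



lemma pdist_nonneg {α : Type} {p : Ω → ℝ} (hp : ∀ ω, 0 ≤ p ω) (X : Ω → α) (a : α) :
    0 ≤ pdist p X a :=
  Finset.sum_nonneg fun ω _ => by split <;> simp [hp ω]

lemma sum_pdist {α : Type} [Fintype α] {p : Ω → ℝ} (hp1 : ∑ ω, p ω = 1) (X : Ω → α) :
    ∑ a, pdist p X a = 1 := by
  unfold pdist
  rw [Finset.sum_comm]
  simp [hp1]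

lemma pdist_comp {α β : Type} [Fintype α] (p : Ω → ℝ) (S : Ω → α) (φ : α → β) (y : β) :
    pdist p (fun ω => φ (S ω)) y = ∑ x, if φ x = y then pdist p S x else 0 := by
  unfold pdist
  have h : ∀ x : α, (if φ x = y then ∑ ω, if S ω = x then p ω else 0 else 0)
      = ∑ ω, if S ω = x ∧ φ x = y then p ω else 0 := by
    intro x
    by_cases hc : φ x = y
    · rw [if_pos hc]; exact Finset.sum_congr rfl fun ω _ => by simp [hc]
    · rw [if_neg hc]; exact (Finset.sum_eq_zero fun ω _ => by simp [hc]).symm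
  simp only [h]
  rw [Finset.sum_comm]
  refine Finset.sum_congr rfl fun ω _ => ?_
  have : ∀ x : α, (S ω = x ∧ φ x = y) ↔ (x = S ω ∧ φ (S ω) = y) := by
    intro x; constructor
    · rintro ⟨h1, h2⟩; subst h1; exact ⟨rfl, h2⟩
    · rintro ⟨h1, h2⟩; subst h1; exact ⟨rfl, h2⟩
  simp only [this, ite_and]
  simp [Finset.sum_ite_eq]

lemma ent_comp_inj {α β : Type} [Fintype α] [Fintype β] (p : Ω → ℝ) (S : Ω → α)
    (f : α → β) (hf : Function.Injective f) :
    ent p (fun ω => f (S ω)) = ent p S := by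
  unfold ent
  have h0 : ∀ b ∈ (univ : Finset β), b ∉ univ.image f →
      Real.negMulLog (pdist p (fun ω => f (S ω)) b) = 0 := by
    intro b _ hb
    have : pdist p (fun ω => f (S ω)) b = 0 := by
      apply Finset.sum_eq_zero
      intro ω _
      rw [if_neg]
      intro h; exact hb (Finset.mem_image.2 ⟨S ω, Finset.mem_univ _, h⟩)
    simp [this]
  rw [← Finset.sum_subset (Finset.subset_univ _) h0,
    Finset.sum_image (fun x _ y _ h => hf h)]
  refine Finset.sum_congr rfl fun a _ => ?_
  congr 1
  refine Finset.sum_congr rfl fun ω _ => ?_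
  simp [hf.eq_iff]

lemma sum_prod_pi : ∀ (n : ℕ) (α : Fin n → Type) [inst : ∀ i, Fintype (α i)]
    (q : ∀ i, α i → ℝ), ∑ x : (∀ i, α i), ∏ j, q j (x j) = ∏ j, ∑ a, q j a := by
  intro n
  induction n with
  | zero => intro α inst q; simp
  | succ n ih =>
    intro α inst q
    rw [← Equiv.sum_comp (Fin.consEquiv α) (fun x => ∏ j, q j (x j)), Fintype.sum_prod_type]
    simp only [Fin.consEquiv_apply]
    have : ∀ (a : α 0) (t : ∀ i : Fin n, α i.succ),
        ∏ j, q j (Fin.cons a t j) = q 0 a * ∏ j : Fin n, q j.succ (t j) := by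
      intro a t
      rw [Fin.prod_univ_succ]
      simp
    simp only [this]
    rw [Fin.prod_univ_succ]
    rw [← Finset.sum_mul_sum, ih (fun i => α i.succ) (fun i => q i.succ)]

lemma sum_negMulLog_prod : ∀ (n : ℕ) (α : Fin n → Type) [inst : ∀ i, Fintype (α i)]
    (q : ∀ i, α i → ℝ), (∀ i, ∑ a, q i a = 1) →
    ∑ x : (∀ i, α i), Real.negMulLog (∏ j, q j (x j)) = ∑ j, ∑ a, Real.negMulLog (q j a) := by
  intro n
  induction n with
  | zero => intro α inst q hq1; simp
  | succ n ih =>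
    intro α inst q hq1
    rw [← Equiv.sum_comp (Fin.consEquiv α)
      (fun x => Real.negMulLog (∏ j, q j (x j))), Fintype.sum_prod_type]
    simp only [Fin.consEquiv_apply]
    have h1 : ∀ (a : α 0) (t : ∀ i : Fin n, α i.succ),
        ∏ j, q j (Fin.cons a t j) = q 0 a * ∏ j : Fin n, q j.succ (t j) := by
      intro a t; rw [Fin.prod_univ_succ]; simp
    simp only [h1, Real.negMulLog_mul]
    rw [Fin.sum_univ_succ]
    have h2 : ∑ t : (∀ i : Fin n, α i.succ), ∏ j : Fin n, q j.succ (t j) = 1 := by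
      rw [sum_prod_pi]; simp [fun i : Fin n => hq1 i.succ]
    have h3 := ih (fun i => α i.succ) (fun i => q i.succ) (fun i => hq1 i.succ)
    have h4 : ∀ a : α 0, ∑ t : (∀ i : Fin n, α i.succ),
        ((∏ j : Fin n, q j.succ (t j)) * Real.negMulLog (q 0 a)
          + q 0 a * Real.negMulLog (∏ j : Fin n, q j.succ (t j)))
        = Real.negMulLog (q 0 a)
          + q 0 a * ∑ j : Fin n, ∑ b, Real.negMulLog (q j.succ b) := by
      intro a
      rw [Finset.sum_add_distrib, ← Finset.sum_mul, ← Finset.mul_sum, h2, h3, one_mul]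
    simp only [h4]
    rw [Finset.sum_add_distrib, ← Finset.sum_mul, hq1 0, one_mul]

lemma triple_comm {A B C : Type} [Fintype A] [Fintype B] [Fintype C] (X : A → B → C → ℝ) :
    ∑ a, ∑ b, ∑ c, X a b c = ∑ c, ∑ a, ∑ b, X a b c := by
  have h1 : ∀ a, ∑ b, ∑ c, X a b c = ∑ c, ∑ b, X a b c := fun a => Finset.sum_comm
  simp only [h1]
  exact Finset.sum_comm

lemma gibbs_key {A B C : Type} [Fintype A] [Fintype B] [Fintype C] (f : A → B → C → ℝ)
    (hf : ∀ a b c, 0 ≤ f a b c) (hsum : ∑ a, ∑ b, ∑ c, f a b c = 1) :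
    (∑ a, ∑ b, ∑ c, Real.negMulLog (f a b c))
      + ∑ c, Real.negMulLog (∑ a, ∑ b, f a b c)
    ≤ (∑ a, ∑ c, Real.negMulLog (∑ b, f a b c))
      + ∑ b, ∑ c, Real.negMulLog (∑ a, f a b c) := by
  set g : A → C → ℝ := fun a c => ∑ b, f a b c with hg_def
  set h : B → C → ℝ := fun b c => ∑ a, f a b c with hh_def
  set k : C → ℝ := fun c => ∑ a, ∑ b, f a b c with hk_def
  have hg0 : ∀ a c, 0 ≤ g a c := fun a c => Finset.sum_nonneg fun b _ => hf a b c
  have hh0 : ∀ b c, 0 ≤ h b c := fun b c => Finset.sum_nonneg fun a _ => hf a b c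
  have hk0 : ∀ c, 0 ≤ k c := fun c =>
    Finset.sum_nonneg fun a _ => Finset.sum_nonneg fun b _ => hf a b c
  -- expand entropies as triple sums
  have eg : ∑ a, ∑ c, Real.negMulLog (g a c)
      = ∑ a, ∑ b, ∑ c, (-(f a b c * Real.log (g a c))) := by
    refine Finset.sum_congr rfl fun a _ => ?_
    rw [Finset.sum_comm]
    refine Finset.sum_congr rfl fun c _ => ?_
    rw [Real.negMulLog, hg_def, neg_mul, Finset.sum_mul, ← Finset.sum_neg_distrib]
  have eh : ∑ b, ∑ c, Real.negMulLog (h b c)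
      = ∑ a, ∑ b, ∑ c, (-(f a b c * Real.log (h b c))) := by
    rw [triple_comm fun a b c => (-(f a b c * Real.log (h b c)))]
    rw [Finset.sum_comm]
    refine Finset.sum_congr rfl fun b _ => ?_
    rw [Finset.sum_comm]
    refine Finset.sum_congr rfl fun c _ => ?_
    rw [Real.negMulLog, hh_def, neg_mul, Finset.sum_mul, ← Finset.sum_neg_distrib]
  have ek : ∑ c, Real.negMulLog (k c)
      = ∑ a, ∑ b, ∑ c, (-(f a b c * Real.log (k c))) := by
    rw [triple_comm fun a b c => (-(f a b c * Real.log (k c)))]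
    refine Finset.sum_congr rfl fun c _ => ?_
    rw [Real.negMulLog, hk_def, neg_mul, Finset.sum_mul, ← Finset.sum_neg_distrib]
    refine Finset.sum_congr rfl fun a _ => ?_
    rw [Finset.sum_mul, ← Finset.sum_neg_distrib]
  have ef : ∑ a, ∑ b, ∑ c, Real.negMulLog (f a b c)
      = ∑ a, ∑ b, ∑ c, (-(f a b c * Real.log (f a b c))) := by
    simp [Real.negMulLog, neg_mul]
  -- the pointwise bound
  set D : A → B → C → ℝ :=
    fun a b c => (if k c = 0 then 0 else g a c * h b c / k c) - f a b c with hD_def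
  have claim1 : ∀ a b c,
      f a b c * (Real.log (g a c) + Real.log (h b c)
        - Real.log (f a b c) - Real.log (k c)) ≤ D a b c := by
    intro a b c
    rcases eq_or_lt_of_le (hf a b c) with ht | ht
    · have ht' : f a b c = 0 := ht.symm
      simp only [hD_def, ht', zero_mul, sub_zero]
      split
      · norm_num
      · exact div_nonneg (mul_nonneg (hg0 a c) (hh0 b c)) (hk0 c)
    · have hgp : 0 < g a c := lt_of_lt_of_le ht
        (Finset.single_le_sum (fun b _ => hf a b c) (Finset.mem_univ b))
      have hhp : 0 < h b c := lt_of_lt_of_le ht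
        (Finset.single_le_sum (fun a _ => hf a b c) (Finset.mem_univ a))
      have hkp : 0 < k c := lt_of_lt_of_le hgp
        (Finset.single_le_sum (fun a _ => hg0 a c) (Finset.mem_univ a))
      have hratio : 0 < g a c * h b c / (f a b c * k c) :=
        div_pos (mul_pos hgp hhp) (mul_pos ht hkp)
      have hlog : Real.log (g a c) + Real.log (h b c)
          - Real.log (f a b c) - Real.log (k c)
          = Real.log (g a c * h b c / (f a b c * k c)) := by
        rw [Real.log_div (by positivity) (by positivity),
          Real.log_mul (ne_of_gt hgp) (ne_of_gt hhp),
          Real.log_mul (ne_of_gt ht) (ne_of_gt hkp)]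
        ring
      rw [hlog, hD_def]
      simp only [if_neg (ne_of_gt hkp)]
      calc f a b c * Real.log (g a c * h b c / (f a b c * k c))
          ≤ f a b c * (g a c * h b c / (f a b c * k c) - 1) :=
            mul_le_mul_of_nonneg_left (Real.log_le_sub_one_of_pos hratio) (le_of_lt ht)
        _ = g a c * h b c / k c - f a b c := by
            field_simp
  have claim2 : ∑ a, ∑ b, ∑ c, D a b c ≤ 0 := by
    have e1 : ∑ a, ∑ b, ∑ c, D a b c
        = (∑ a, ∑ b, ∑ c, (if k c = 0 then 0 else g a c * h b c / k c))
          - ∑ a, ∑ b, ∑ c, f a b c := by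
      simp [hD_def, Finset.sum_sub_distrib]
    have e2 : ∑ a, ∑ b, ∑ c, (if k c = 0 then 0 else g a c * h b c / k c)
        = ∑ c, (if k c = 0 then 0 else k c) := by
      rw [triple_comm]
      refine Finset.sum_congr rfl fun c _ => ?_
      by_cases hk : k c = 0
      · simp [hk]
      · simp only [if_neg hk]
        have : ∀ a, ∑ b, g a c * h b c / k c = g a c := by
          intro a
          rw [← Finset.sum_div, ← Finset.mul_sum]
          have : ∑ b, h b c = k c := by
            rw [hh_def, hk_def]; exact Finset.sum_comm
          rw [this, mul_div_assoc, div_self hk, mul_one]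
        simp only [this]
        rfl
    have e3 : ∑ c, (if k c = 0 then 0 else k c) ≤ ∑ c, k c := by
      refine Finset.sum_le_sum fun c _ => ?_
      by_cases hk : k c = 0 <;> simp [hk, hk0 c]
    have e4 : ∑ c, k c = 1 := by
      simp only [hk_def]
      rw [← triple_comm f]
      exact hsum
    rw [e1, e2, hsum]
    linarith
  have main : ∑ a, ∑ b, ∑ c,
      (f a b c * (Real.log (g a c) + Real.log (h b c)
        - Real.log (f a b c) - Real.log (k c))) ≤ 0 := by
    refine le_trans ?_ claim2
    refine Finset.sum_le_sum fun a _ => Finset.sum_le_sum fun b _ =>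
      Finset.sum_le_sum fun c _ => claim1 a b c
  rw [ef, eg, eh, ek]
  have expand : ∑ a, ∑ b, ∑ c,
      (f a b c * (Real.log (g a c) + Real.log (h b c)
        - Real.log (f a b c) - Real.log (k c)))
      = (∑ a, ∑ b, ∑ c, (-(f a b c * Real.log (f a b c))))
        + (∑ a, ∑ b, ∑ c, (-(f a b c * Real.log (k c))))
        - (∑ a, ∑ b, ∑ c, (-(f a b c * Real.log (g a c))))
        - (∑ a, ∑ b, ∑ c, (-(f a b c * Real.log (h b c)))) := by
    simp only [← Finset.sum_add_distrib, ← Finset.sum_sub_distrib]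
    refine Finset.sum_congr rfl fun a _ => Finset.sum_congr rfl fun b _ =>
      Finset.sum_congr rfl fun c _ => by ring
  linarith [main, expand]

section Submod
variable {A B C : Type} [Fintype A] [Fintype B] [Fintype C]
  {p : Ω → ℝ} (U : Ω → A) (W : Ω → B) (Y : Ω → C)

lemma ent_UWY (p : Ω → ℝ) :
    ent p (fun ω => ((U ω, W ω), Y ω))
      = ∑ a, ∑ b, ∑ c, Real.negMulLog (pdist p (fun ω => (U ω, W ω, Y ω)) (a, b, c)) := by
  have : ent p (fun ω => ((U ω, W ω), Y ω))
      = ent p (fun ω => (U ω, W ω, Y ω)) := by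
    have hinj : Function.Injective (fun x : A × B × C => ((x.1, x.2.1), x.2.2)) := by
      intro x y hxy
      simp only [Prod.mk.injEq] at hxy
      exact Prod.ext hxy.1.1 (Prod.ext hxy.1.2 hxy.2)
    exact ent_comp_inj p (fun ω => (U ω, W ω, Y ω)) _ hinj
  rw [this]
  unfold ent
  rw [Fintype.sum_prod_type]
  exact Finset.sum_congr rfl fun a _ => Fintype.sum_prod_type _

lemma pdist_UY (p : Ω → ℝ) (a : A) (c : C) :
    pdist p (fun ω => (U ω, Y ω)) (a, c)
      = ∑ b, pdist p (fun ω => (U ω, W ω, Y ω)) (a, b, c) := by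
  refine Eq.trans (pdist_comp p (fun ω => (U ω, W ω, Y ω)) (fun x => (x.1, x.2.2)) (a, c)) ?_
  rw [Fintype.sum_prod_type]
  simp [Fintype.sum_prod_type, Prod.mk.injEq, ite_and, Finset.sum_ite_eq, Finset.sum_ite_eq']

lemma pdist_WY (p : Ω → ℝ) (b : B) (c : C) :
    pdist p (fun ω => (W ω, Y ω)) (b, c)
      = ∑ a, pdist p (fun ω => (U ω, W ω, Y ω)) (a, b, c) := by
  refine Eq.trans (pdist_comp p (fun ω => (U ω, W ω, Y ω)) (fun x => x.2) (b, c)) ?_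
  rw [Fintype.sum_prod_type]
  simp [Fintype.sum_prod_type, Prod.mk.injEq, ite_and, Finset.sum_ite_eq, Finset.sum_ite_eq']

lemma pdist_Y3 (p : Ω → ℝ) (c : C) :
    pdist p Y c = ∑ a, ∑ b, pdist p (fun ω => (U ω, W ω, Y ω)) (a, b, c) := by
  refine Eq.trans (pdist_comp p (fun ω => (U ω, W ω, Y ω)) (fun x => x.2.2) c) ?_
  rw [Fintype.sum_prod_type]
  refine Finset.sum_congr rfl fun a _ => ?_
  rw [Fintype.sum_prod_type]
  simp [Finset.sum_ite_eq, Finset.sum_ite_eq']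

lemma cent_pair_le (hp : ∀ ω, 0 ≤ p ω) (hp1 : ∑ ω, p ω = 1) :
    cent p (fun ω => (U ω, W ω)) Y ≤ cent p U Y + cent p W Y := by
  set F : A → B → C → ℝ := fun a b c => pdist p (fun ω => (U ω, W ω, Y ω)) (a, b, c) with hF
  have hf : ∀ a b c, 0 ≤ F a b c := fun a b c => pdist_nonneg hp _ _
  have hsum : ∑ a, ∑ b, ∑ c, F a b c = 1 := by
    have := sum_pdist hp1 (fun ω => (U ω, W ω, Y ω))
    rw [Fintype.sum_prod_type] at this
    rw [← this]
    exact Finset.sum_congr rfl fun a _ =>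
      (Fintype.sum_prod_type fun y : B × C => pdist p (fun ω => (U ω, W ω, Y ω)) (a, y)).symm
  have key := gibbs_key F hf hsum
  have e1 := ent_UWY U W Y p
  have e2 : ent p (fun ω => (U ω, Y ω)) = ∑ a, ∑ c, Real.negMulLog (∑ b, F a b c) := by
    unfold ent
    rw [Fintype.sum_prod_type]
    refine Finset.sum_congr rfl fun a _ => Finset.sum_congr rfl fun c _ => ?_
    rw [pdist_UY U W Y p a c]
  have e3 : ent p (fun ω => (W ω, Y ω)) = ∑ b, ∑ c, Real.negMulLog (∑ a, F a b c) := by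
    unfold ent
    rw [Fintype.sum_prod_type]
    refine Finset.sum_congr rfl fun b _ => Finset.sum_congr rfl fun c _ => ?_
    rw [pdist_WY U W Y p b c]
  have e4 : ent p Y = ∑ c, Real.negMulLog (∑ a, ∑ b, F a b c) := by
    unfold ent
    refine Finset.sum_congr rfl fun c _ => ?_
    rw [pdist_Y3 U W Y p c]
  unfold cent
  rw [e1, e2, e3, e4]
  linarith
end Submod


lemma cent_fullvec_le {β : Type} [Fintype β] :
    ∀ (n : ℕ) (α : Fin n → Type) [inst : ∀ i, Fintype (α i)] (p : Ω → ℝ)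
      (_ : ∀ ω, 0 ≤ p ω) (_ : ∑ ω, p ω = 1) (X : ∀ i, Ω → α i) (Y : Ω → β),
      cent p (fullvec X) Y ≤ ∑ j, cent p (X j) Y := by
  intro n
  induction n with
  | zero =>
    intro α inst p hp hp1 X Y
    have hrepr : (fun ω => (fullvec X ω, Y ω))
        = fun ω => ((fun c : β => ((fun i : Fin 0 => i.elim0 : ∀ i : Fin 0, α i), c)) (Y ω)) := by
      funext ω
      exact Prod.ext (funext fun i => i.elim0) rfl
    have hinj : Function.Injective (fun c : β => ((fun i : Fin 0 => i.elim0 : ∀ i : Fin 0, α i), c)) := by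
      intro c d h
      exact congrArg Prod.snd h
    have : ent p (fun ω => (fullvec X ω, Y ω)) = ent p Y := by
      rw [hrepr]
      exact ent_comp_inj p Y _ hinj
    unfold cent
    simp [this]
  | succ n ih =>
    intro α inst p hp hp1 X Y
    set U : Ω → α 0 := X 0 with hU
    set W : Ω → (∀ i : Fin n, α i.succ) := fullvec (fun i : Fin n => X i.succ) with hW
    have hrepr : fullvec X = fun ω => (Fin.cons (U ω) (W ω) : ∀ i, α i) := by
      funext ω
      funext i
      induction i using Fin.cases with
      | zero => simp [fullvec, hU]
      | succ j => simp [fullvec, hW]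
    have hinj : Function.Injective
        (fun x : (α 0 × (∀ i : Fin n, α i.succ)) × β =>
          ((Fin.cons x.1.1 x.1.2 : ∀ i, α i), x.2)) := by
      intro q r h
      simp only [Prod.mk.injEq] at h
      have h0 : q.1.1 = r.1.1 := by
        have := congrFun h.1 0; simpa using this
      have h1 : q.1.2 = r.1.2 := by
        funext i
        have := congrFun h.1 i.succ; simpa using this
      exact Prod.ext (Prod.ext h0 h1) h.2
    have hstep : cent p (fullvec X) Y = cent p (fun ω => (U ω, W ω)) Y := by
      unfold cent
      congr 1
      rw [hrepr]
      exact ent_comp_inj p (fun ω => ((U ω, W ω), Y ω)) _ hinj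
    have h2 : cent p (fun ω => (U ω, W ω)) Y ≤ cent p U Y + cent p W Y :=
      cent_pair_le U W Y hp hp1
    have h3 : cent p W Y ≤ ∑ i : Fin n, cent p (X i.succ) Y :=
      ih (fun i => α i.succ) p hp hp1 (fun i => X i.succ) Y
    rw [hstep, Fin.sum_univ_succ]
    linarith

lemma ent_fullvec_indep {n : ℕ} {α : Fin n → Type} [∀ i, Fintype (α i)]
    (p : Ω → ℝ) (hp1 : ∑ ω, p ω = 1) (X : ∀ i, Ω → α i)
    (hind : ∀ x : ∀ i, α i, pdist p (fullvec X) x = ∏ j, pdist p (X j) (x j)) :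
    ent p (fullvec X) = ∑ j, ent p (X j) := by
  unfold ent
  have h1 : ∑ x : (∀ i, α i), Real.negMulLog (pdist p (fullvec X) x)
      = ∑ x : (∀ i, α i), Real.negMulLog (∏ j, pdist p (X j) (x j)) :=
    Finset.sum_congr rfl fun x _ => by rw [hind x]
  rw [h1, sum_negMulLog_prod n α (fun j => pdist p (X j)) (fun j => sum_pdist hp1 (X j))]

end AuxHOI

/-- for head-to-head models, RSI = -TC(X|Y) ≤ 0. -/
theorem rsi_head_to_head {Ω β : Type} [Fintype Ω] [Fintype β] {n : ℕ}
    {α : Fin n → Type} [∀ i, Fintype (α i)] (hn : 1 ≤ n)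
    (p : Ω → ℝ) (hp : ∀ ω, 0 ≤ p ω) (hp1 : ∑ ω, p ω = 1)
    (X : ∀ i, Ω → α i) (Y : Ω → β)
    (hind : ∀ x : ∀ i, α i, pdist p (fullvec X) x = ∏ j, pdist p (X j) (x j)) :
    RSI p X Y = -((∑ j, cent p (X j) Y) - cent p (fullvec X) Y)
    ∧ RSI p X Y ≤ 0 := by
  have hH : ent p (fullvec X) = ∑ j, ent p (X j) := ent_fullvec_indep p hp1 X hind
  have hle : cent p (fullvec X) Y ≤ ∑ j, cent p (X j) Y :=
    cent_fullvec_le n α p hp hp1 X Y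
  have heq : RSI p X Y = -((∑ j, cent p (X j) Y) - cent p (fullvec X) Y) := by
    unfold RSI mi cent
    simp only [Finset.sum_sub_distrib, Finset.sum_add_distrib, Finset.sum_const,
      Finset.card_univ, nsmul_eq_mul]
    rw [← hH]
    ring
  refine ⟨heq, ?_⟩
  rw [heq]
  linarith
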